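/- For a > 0 and a set Λ of positive integers with ζ_Λ(t) absolutely convergent for Re t > μ₀, and σ > max(μ₀, 1), one has log ∏_{λ∈Λ}(1-e^{-aλ})^{-1} = ∑_{λ∈Λ}∑_{l≥1} e^{-aλl}/l = (1/2πi)∫_{σ-i∞}^{σ+i∞} a^{-t} ζ_Λ(t) ζ(t+1) Γ(t) dt. -/

import Mathlib

open Complex Real MeasureTheory Set

lemma normGammaLe {s : ℂ} (hs : 0 < s.re) : ‖Complex.Gamma s‖ ≤ Real.Gamma s.re := by
  rw [Complex.Gamma_eq_integral hs, Real.Gamma_eq_integral hs, Complex.GammaIntegral]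
  refine (norm_integral_le_integral_norm _).trans_eq ?_
  refine setIntegral_congr_fun measurableSet_Ioi fun x hx => ?_
  rw [norm_mul, Complex.norm_real, Real.norm_eq_abs,
    abs_of_pos (Real.exp_pos _), Complex.norm_cpow_eq_rpow_re_of_pos hx]
  simp [Complex.sub_re]

lemma gammaVerticalCont (σ : ℝ) (hσ : 0 < σ) :
    Continuous fun y : ℝ => Complex.Gamma ((σ : ℂ) + y * I) := by
  rw [continuous_iff_continuousAt]
  intro y
  refine (Complex.differentiableAt_Gamma _ fun m => ?_).continuousAt.comp (by fun_prop)
  intro h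
  have := congrArg Complex.re h
  simp at this
  have : (0:ℝ) ≤ m := Nat.cast_nonneg m
  linarith

lemma gammaVerticalBound (σ : ℝ) (hσ : 0 < σ) (y : ℝ) :
    ‖Complex.Gamma ((σ : ℂ) + y * I)‖ ≤
      Real.Gamma (σ + 2) * ((min (σ ^ 2) 1)⁻¹ * (1 + y ^ 2)⁻¹) := by
  set s : ℂ := (σ : ℂ) + y * I with hs
  have hre : s.re = σ := by simp [hs]
  have him : s.im = y := by simp [hs]
  have hs0 : s ≠ 0 := fun h => by rw [h] at hre; simp at hre; linarith
  have hs1 : s + 1 ≠ 0 := fun h => by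
    have := congrArg Complex.re h
    simp [hre] at this; linarith
  have hΓ2 : Complex.Gamma (s + 2) = (s + 1) * (s * Complex.Gamma s) := by
    have h1 : Complex.Gamma (s + 1) = s * Complex.Gamma s := Complex.Gamma_add_one s hs0
    have h2 : Complex.Gamma (s + 1 + 1) = (s + 1) * Complex.Gamma (s + 1) :=
      Complex.Gamma_add_one (s + 1) hs1
    rw [show s + 2 = s + 1 + 1 by ring, h2, h1]
  have hnorm2 : ‖Complex.Gamma (s + 2)‖ ≤ Real.Gamma (σ + 2) := by
    have h : (s + 2).re = σ + 2 := by simp [hre]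
    simpa [h] using normGammaLe (s := s + 2) (by rw [h]; linarith)
  have h2 : ‖s‖ = Real.sqrt (σ ^ 2 + y ^ 2) := by
    rw [Complex.norm_def, Complex.normSq_apply, hre, him]
    ring_nf
  have h1 : Real.sqrt (σ ^ 2 + y ^ 2) ≤ ‖s + 1‖ := by
    rw [Complex.norm_def, Complex.normSq_apply]
    have hre1 : (s + 1).re = σ + 1 := by simp [hre]
    have him1 : (s + 1).im = y := by simp [him]
    rw [hre1, him1]
    exact Real.sqrt_le_sqrt (by nlinarith)
  have hpos : 0 < σ ^ 2 + y ^ 2 := by positivity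
  have hprod : σ ^ 2 + y ^ 2 ≤ ‖s + 1‖ * ‖s‖ := by
    rw [h2]
    calc σ ^ 2 + y ^ 2 = Real.sqrt (σ ^ 2 + y ^ 2) * Real.sqrt (σ ^ 2 + y ^ 2) :=
        (Real.mul_self_sqrt hpos.le).symm
      _ ≤ ‖s + 1‖ * Real.sqrt (σ ^ 2 + y ^ 2) :=
        mul_le_mul_of_nonneg_right h1 (Real.sqrt_nonneg _)
  have key : (σ ^ 2 + y ^ 2) * ‖Complex.Gamma s‖ ≤ Real.Gamma (σ + 2) := by
    calc (σ ^ 2 + y ^ 2) * ‖Complex.Gamma s‖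
        ≤ ‖s + 1‖ * ‖s‖ * ‖Complex.Gamma s‖ :=
          mul_le_mul_of_nonneg_right hprod (norm_nonneg _)
      _ = ‖Complex.Gamma (s + 2)‖ := by rw [hΓ2]; simp [norm_mul]; ring
      _ ≤ Real.Gamma (σ + 2) := hnorm2
  have step1 : ‖Complex.Gamma s‖ ≤ Real.Gamma (σ + 2) * (σ ^ 2 + y ^ 2)⁻¹ := by
    rw [← div_eq_mul_inv, le_div_iff₀ hpos]
    linarith [key]
  refine step1.trans (mul_le_mul_of_nonneg_left ?_ (Real.Gamma_nonneg_of_nonneg (by linarith)))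
  rw [← mul_inv]
  refine inv_anti₀ (by positivity) ?_
  nlinarith [min_le_left (σ ^ 2) 1, min_le_right (σ ^ 2) 1, sq_nonneg y]

lemma gammaVertical (σ : ℝ) (hσ : 0 < σ) :
    Integrable fun y : ℝ => Complex.Gamma ((σ : ℂ) + y * I) := by
  refine Integrable.mono' (g := fun y : ℝ =>
      Real.Gamma (σ + 2) * ((min (σ ^ 2) 1)⁻¹ * (1 + y ^ 2)⁻¹))
    (((integrable_inv_one_add_sq.const_mul _).const_mul _))
    (gammaVerticalCont σ hσ).aestronglyMeasurable
    (Filter.Eventually.of_forall (gammaVerticalBound σ hσ))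

lemma gammaMellinInv {σ x : ℝ} (hσ : 0 < σ) (hx : 0 < x) :
    ∫ y : ℝ, (x : ℂ) ^ (-((σ : ℂ) + y * I)) * Complex.Gamma ((σ : ℂ) + y * I)
      = 2 * π * Real.exp (-x) := by
  have hline : ∀ y : ℝ, 0 < ((σ : ℂ) + y * I).re := by
    intro y; simpa using hσ
  have hmel : mellin (fun t => (Real.exp (-t) : ℂ)) = Complex.GammaIntegral :=
    Complex.GammaIntegral_eq_mellin.symm
  have hf : MellinConvergent (fun t => (Real.exp (-t) : ℂ)) σ := by
    refine (Complex.GammaIntegral_convergent (s := σ) (by simpa using hσ)).congr_fun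
      (fun t ht => ?_) measurableSet_Ioi
    simp [mul_comm, smul_eq_mul]
  have hFf : Complex.VerticalIntegrable (mellin fun t => (Real.exp (-t) : ℂ)) σ := by
    refine (gammaVertical σ hσ).congr (Filter.Eventually.of_forall fun y => ?_)
    show Complex.Gamma _ = _
    rw [hmel]
    exact Complex.Gamma_eq_integral (hline y)
  have h := mellinInv_mellin_eq σ (fun t => (Real.exp (-t) : ℂ)) hx hf hFf (by fun_prop)
  rw [mellinInv, hmel] at h
  have h2 : ∫ y : ℝ, (x : ℂ) ^ (-((σ : ℂ) + y * I)) • Complex.GammaIntegral ((σ : ℂ) + y * I)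
      = ∫ y : ℝ, (x : ℂ) ^ (-((σ : ℂ) + y * I)) * Complex.Gamma ((σ : ℂ) + y * I) := by
    refine integral_congr_ae (Filter.Eventually.of_forall fun y => ?_)
    show _ • _ = _
    rw [smul_eq_mul, ← Complex.Gamma_eq_integral (hline y)]
  rw [h2, Complex.real_smul] at h
  have hπ : (π : ℂ) ≠ 0 := by
    simp [Real.pi_ne_zero, Complex.ofReal_ne_zero]
  push_cast at h
  field_simp at h
  have hfun : ∀ y : ℝ, (-(↑y * I) + -(σ : ℂ)) = -((σ : ℂ) + y * I) := fun y => by ring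
  try simp_rw [hfun] at h
  rw [h, Complex.ofReal_exp, Complex.ofReal_neg]

lemma part1 (Λ : Set ℕ) (hΛ : ∀ l ∈ Λ, 1 ≤ l) (a : ℝ) (ha : 0 < a) :
    Real.log (∏' l : Λ, (1 - Real.exp (-(a * l)))⁻¹)
      = ∑' l : Λ, ∑' k : ℕ, Real.exp (-(a * l * (k + 1))) / (k + 1) := by
  have hal : ∀ l : Λ, a ≤ a * l := fun l =>
    le_mul_of_one_le_right ha.le (by exact_mod_cast hΛ l l.2)
  have hu1 : ∀ l : Λ, Real.exp (-(a * l)) < 1 := fun l =>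
    Real.exp_lt_one_iff.mpr (by linarith [hal l])
  have hsub : ∀ l : Λ, 0 < 1 - Real.exp (-(a * l)) := fun l => by linarith [hu1 l]
  have hS : ∀ l : Λ, HasSum (fun k : ℕ => Real.exp (-(a * l * (k + 1))) / (k + 1))
      (-Real.log (1 - Real.exp (-(a * l)))) := by
    intro l
    have h := Real.hasSum_pow_div_log_of_abs_lt_one (x := Real.exp (-(a * l)))
      (by rw [abs_of_pos (Real.exp_pos _)]; exact hu1 l)
    have heq : (fun k : ℕ => Real.exp (-(a * l * (k + 1))) / (k + 1))
        = fun k : ℕ => (Real.exp (-(a * l))) ^ (k + 1) / (k + 1) := by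
      funext k
      rw [← Real.exp_nat_mul]
      push_cast
      ring_nf
    rw [heq]
    exact h
  have hT : Summable (fun l : Λ => -Real.log (1 - Real.exp (-(a * l)))) := by
    have hgeom : Summable (fun l : Λ => Real.exp (-(a * l))) := by
      have h0 : Summable (fun n : ℕ => Real.exp (-a) ^ n) :=
        summable_geometric_of_lt_one (Real.exp_nonneg _) (Real.exp_lt_one_iff.mpr (by linarith))
      have h2 : Summable (fun n : ℕ => Real.exp (-(a * n))) := by
        refine h0.congr fun n => ?_
        rw [← Real.exp_nat_mul]
        ring_nf
      exact h2.subtype Λ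
    refine Summable.of_nonneg_of_le (fun l => ?_) (fun l => ?_)
      (hgeom.mul_left (1 - Real.exp (-a))⁻¹)
    · have h := Real.log_nonpos (x := 1 - Real.exp (-(a * (l:ℕ) : ℝ))) (by linarith [hsub l]) (by linarith [Real.exp_pos (-(a * (l:ℕ) : ℝ))])
      linarith
    · have hua : Real.exp (-(a * l)) ≤ Real.exp (-a) := Real.exp_le_exp.mpr (by linarith [hal l])
      have hea : 0 < 1 - Real.exp (-a) := by
        linarith [Real.exp_lt_one_iff.mpr (show -a < 0 by linarith)]
      calc -Real.log (1 - Real.exp (-(a * l)))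
          ≤ (1 - Real.exp (-(a * l)))⁻¹ - 1 := by
            rw [← Real.log_inv]
            exact Real.log_le_sub_one_of_pos (inv_pos.mpr (hsub l))
        _ = Real.exp (-(a * l)) * (1 - Real.exp (-(a * l)))⁻¹ := by
            have hne := ne_of_gt (hsub l)
            field_simp
            ring
        _ ≤ (1 - Real.exp (-a))⁻¹ * Real.exp (-(a * l)) := by
            have := inv_anti₀ hea (by linarith : 1 - Real.exp (-a) ≤ 1 - Real.exp (-(a * l)))
            calc Real.exp (-(a * l)) * (1 - Real.exp (-(a * l)))⁻¹
                ≤ Real.exp (-(a * l)) * (1 - Real.exp (-a))⁻¹ :=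
                  mul_le_mul_of_nonneg_left this (Real.exp_nonneg _)
              _ = (1 - Real.exp (-a))⁻¹ * Real.exp (-(a * l)) := mul_comm _ _
  have hprod : HasProd (fun l : Λ => (1 - Real.exp (-(a * l)))⁻¹)
      (Real.exp (∑' l : Λ, -Real.log (1 - Real.exp (-(a * l))))) := by
    have h := hT.hasSum.rexp
    have heq : (rexp ∘ fun l : Λ => -Real.log (1 - Real.exp (-(a * l))))
        = fun l : Λ => (1 - Real.exp (-(a * l)))⁻¹ := by
      funext l
      simp only [Function.comp_apply]
      rw [Real.exp_neg, Real.exp_log (hsub l)]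
    rwa [heq] at h
  rw [hprod.tprod_eq, Real.log_exp]
  exact tsum_congr fun l => ((hS l).tsum_eq).symm

lemma part2 (Λ : Set ℕ) (hΛ : ∀ l ∈ Λ, 1 ≤ l)
    (μ₀ : ℝ) (habs : ∀ r : ℝ, μ₀ < r → Summable fun l : Λ => ((l : ℝ) ^ r)⁻¹)
    (a : ℝ) (ha : 0 < a) (σ : ℝ) (hσ : max μ₀ 1 < σ) :
    ((∑' l : Λ, ∑' k : ℕ, Real.exp (-(a * l * (k + 1))) / (k + 1) : ℝ) : ℂ)
        = (2 * (π : ℂ) * I)⁻¹ *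
          ∫ y : ℝ,
            (a : ℂ) ^ (-((σ : ℂ) + y * I)) *
              (∑' l : Λ, ((l : ℕ) : ℂ) ^ (-((σ : ℂ) + y * I))) *
              riemannZeta (((σ : ℂ) + y * I) + 1) *
              Complex.Gamma ((σ : ℂ) + y * I) * I := by
  have hσ1 : 1 < σ := lt_of_le_of_lt (le_max_right _ _) hσ
  have hσμ : μ₀ < σ := lt_of_le_of_lt (le_max_left _ _) hσ
  have hσ0 : 0 < σ := by linarith
  have hl1 : ∀ l : Λ, (1 : ℝ) ≤ ((l : ℕ) : ℝ) := fun l => by exact_mod_cast hΛ l l.2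
  have hl0 : ∀ l : Λ, (0 : ℝ) < ((l : ℕ) : ℝ) := fun l => lt_of_lt_of_le one_pos (hl1 l)
  -- the summand over pairs
  set g : ↥Λ × ℕ → ℝ → ℂ := fun p y =>
    ((a : ℂ) ^ (-((σ : ℂ) + y * I)) * ((p.1 : ℕ) : ℂ) ^ (-((σ : ℂ) + y * I))) *
      (((p.2 : ℂ) + 1) ^ (-(((σ : ℂ) + y * I) + 1)) * Complex.Gamma ((σ : ℂ) + y * I)) with hg
  set c : ↥Λ × ℕ → ℝ := fun p =>
    (a ^ (-σ) * ((p.1 : ℕ) : ℝ) ^ (-σ)) * (((p.2 : ℕ) : ℝ) + 1) ^ (-(σ + 1)) with hcdef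
  have hΛσ : Summable fun l : Λ => ((l : ℕ) : ℝ) ^ (-σ) := by
    refine (habs σ hσμ).congr fun l => ?_
    rw [Real.rpow_neg (Nat.cast_nonneg _)]
  have hkσ : Summable fun k : ℕ => (((k : ℕ) : ℝ) + 1) ^ (-(σ + 1)) := by
    have h := Real.summable_nat_rpow_inv.mpr (show 1 < σ + 1 by linarith)
    have h2 := (summable_nat_add_iff 1).mpr h
    refine h2.congr fun k => ?_
    push_cast
    rw [Real.rpow_neg (by positivity)]
  have hc : Summable c := by
    rw [hcdef]
    exact Summable.mul_of_nonneg (f := fun l : ↥Λ => a ^ (-σ) * ((l : ℕ) : ℝ) ^ (-σ))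
      (g := fun k : ℕ => (((k : ℕ) : ℝ) + 1) ^ (-(σ + 1)))
      (hΛσ.mul_left (a ^ (-σ))) hkσ (fun l => by positivity) (fun k => by positivity)
  have hcnonneg : ∀ p, 0 ≤ c p := fun p => by
    simp only [hcdef]
    positivity
  -- norm of g
  have hnorm : ∀ (p : ↥Λ × ℕ) (y : ℝ),
      ‖g p y‖ = c p * ‖Complex.Gamma ((σ : ℂ) + y * I)‖ := by
    intro p y
    have h1 : ‖(a : ℂ) ^ (-((σ : ℂ) + y * I))‖ = a ^ (-σ) := by
      rw [Complex.norm_cpow_eq_rpow_re_of_pos ha]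
      congr 1
      simp
    have h2 : ‖((p.1 : ℕ) : ℂ) ^ (-((σ : ℂ) + y * I))‖ = ((p.1 : ℕ) : ℝ) ^ (-σ) := by
      rw [show ((p.1 : ℕ) : ℂ) = (((p.1 : ℕ) : ℝ) : ℂ) by push_cast; ring,
        Complex.norm_cpow_eq_rpow_re_of_pos (hl0 p.1)]
      congr 1
      simp
    have h3 : ‖((p.2 : ℂ) + 1) ^ (-(((σ : ℂ) + y * I) + 1))‖ = (((p.2 : ℕ) : ℝ) + 1) ^ (-(σ + 1)) := by
      rw [show ((p.2 : ℂ) + 1) = ((((p.2 : ℕ) : ℝ) + 1 : ℝ) : ℂ) by push_cast; ring,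
        Complex.norm_cpow_eq_rpow_re_of_pos (by positivity)]
      congr 1
      simp
    rw [hg]
    simp only [norm_mul, h1, h2, h3, hcdef]
    ring
  -- continuity of g p
  have hcontg : ∀ p : ↥Λ × ℕ, Continuous fun y : ℝ => g p y := by
    intro p
    have hline : Continuous fun y : ℝ => -((σ : ℂ) + y * I) := by fun_prop
    have hline2 : Continuous fun y : ℝ => -(((σ : ℂ) + y * I) + 1) := by fun_prop
    have c1 : Continuous fun y : ℝ => (a : ℂ) ^ (-((σ : ℂ) + y * I)) :=
      hline.const_cpow (Or.inl (by exact_mod_cast ha.ne'))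
    have c2 : Continuous fun y : ℝ => ((p.1 : ℕ) : ℂ) ^ (-((σ : ℂ) + y * I)) := by
      refine hline.const_cpow (Or.inl ?_)
      have := hl0 p.1
      exact_mod_cast this.ne'
    have c3 : Continuous fun y : ℝ => ((p.2 : ℂ) + 1) ^ (-(((σ : ℂ) + y * I) + 1)) := by
      refine hline2.const_cpow (Or.inl (Nat.cast_add_one_ne_zero p.2))
    exact ((c1.mul c2).mul (c3.mul (gammaVerticalCont σ hσ0)))
  -- summability of g at each y
  have hsum_g : ∀ y : ℝ, Summable fun p : ↥Λ × ℕ => g p y := by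
    intro y
    refine Summable.of_norm ?_
    exact (hc.mul_right ‖Complex.Gamma ((σ : ℂ) + y * I)‖).congr fun p => (hnorm p y).symm
  -- pointwise expansion of the integrand
  have hint : ∀ y : ℝ,
      (a : ℂ) ^ (-((σ : ℂ) + y * I)) *
        (∑' l : Λ, ((l : ℕ) : ℂ) ^ (-((σ : ℂ) + y * I))) *
        riemannZeta (((σ : ℂ) + y * I) + 1) * Complex.Gamma ((σ : ℂ) + y * I)
      = ∑' p : ↥Λ × ℕ, g p y := by
    intro y
    rw [zeta_eq_tsum_one_div_nat_add_one_cpow (s := ((σ : ℂ) + y * I) + 1)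
      (by simp; linarith)]
    rw [(hsum_g y).tsum_prod]
    have hinner : ∀ l : ↥Λ, (∑' k : ℕ, g (l, k) y)
        = ((a : ℂ) ^ (-((σ : ℂ) + y * I)) * ((l : ℕ) : ℂ) ^ (-((σ : ℂ) + y * I))) *
          ((∑' k : ℕ, ((k : ℂ) + 1) ^ (-(((σ : ℂ) + y * I) + 1))) *
            Complex.Gamma ((σ : ℂ) + y * I)) := by
      intro l
      rw [hg]
      simp only
      rw [tsum_mul_left, tsum_mul_right]
    rw [tsum_congr hinner, tsum_mul_right, tsum_mul_left]
    rw [show (∑' n : ℕ, 1 / ((n : ℂ) + 1) ^ (((σ : ℂ) + y * I) + 1))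
        = ∑' k : ℕ, ((k : ℂ) + 1) ^ (-(((σ : ℂ) + y * I) + 1)) from
      tsum_congr fun n => by rw [one_div, ← cpow_neg]]
    ring
  -- Fubini
  have hKne : (∫⁻ y : ℝ, (‖Complex.Gamma ((σ : ℂ) + y * I)‖₊ : ENNReal)) ≠ ⊤ :=
    ne_of_lt (gammaVertical σ hσ0).2
  have heach : ∀ p : ↥Λ × ℕ, (∫⁻ y, (‖g p y‖₊ : ENNReal))
      = ENNReal.ofReal (c p) * ∫⁻ y : ℝ, (‖Complex.Gamma ((σ : ℂ) + y * I)‖₊ : ENNReal) := by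
    intro p
    rw [← lintegral_const_mul' _ _ ENNReal.ofReal_ne_top]
    refine lintegral_congr fun y => ?_
    rw [← enorm_eq_nnnorm, ← enorm_eq_nnnorm, ← ofReal_norm, ← ofReal_norm, hnorm p y,
      ENNReal.ofReal_mul (hcnonneg p)]
  have hfin : (∑' p : ↥Λ × ℕ, ∫⁻ y, (‖g p y‖₊ : ENNReal)) ≠ ⊤ := by
    rw [tsum_congr heach, ENNReal.tsum_mul_right, ← ENNReal.ofReal_tsum_of_nonneg hcnonneg hc]
    exact ENNReal.mul_ne_top ENNReal.ofReal_ne_top hKne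
  have hswap : (∫ y : ℝ, ∑' p : ↥Λ × ℕ, g p y) = ∑' p : ↥Λ × ℕ, ∫ y : ℝ, g p y :=
    integral_tsum (fun p => (hcontg p).aestronglyMeasurable) hfin
  -- value of each integral
  have hval : ∀ p : ↥Λ × ℕ, (∫ y : ℝ, g p y)
      = (2 * (π : ℂ)) *
        ((Real.exp (-(a * (p.1 : ℕ) * ((p.2 : ℕ) + 1))) / ((p.2 : ℕ) + 1) : ℝ) : ℂ) := by
    rintro ⟨l, k⟩
    have hx : 0 < a * ((l : ℕ) : ℝ) * (((k : ℕ) : ℝ) + 1) :=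
      mul_pos (mul_pos ha (hl0 l)) (by positivity)
    have hrw : ∀ y : ℝ, g (l, k) y
        = ((a * ((l : ℕ) : ℝ) * (((k : ℕ) : ℝ) + 1) : ℝ) : ℂ) ^ (-((σ : ℂ) + y * I)) *
            Complex.Gamma ((σ : ℂ) + y * I) * (((k : ℕ) : ℂ) + 1)⁻¹ := by
      intro y
      rw [hg]
      simp only
      have hb : ((k : ℂ) + 1) ≠ 0 := Nat.cast_add_one_ne_zero k
      rw [show (-(((σ : ℂ) + y * I) + 1)) = (-((σ : ℂ) + y * I)) + (-1) by ring,
        cpow_add _ _ hb, cpow_neg_one]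
      rw [show ((a * ((l : ℕ) : ℝ) * (((k : ℕ) : ℝ) + 1) : ℝ) : ℂ)
          = ((a * ((l : ℕ) : ℝ) : ℝ) : ℂ) * (((((k : ℕ) : ℝ) + 1) : ℝ) : ℂ) by push_cast; ring]
      rw [mul_cpow_ofReal_nonneg (by positivity) (by positivity)]
      rw [show ((a * ((l : ℕ) : ℝ) : ℝ) : ℂ) = ((a : ℝ) : ℂ) * ((((l : ℕ) : ℝ)) : ℂ) by
        push_cast; ring]
      rw [mul_cpow_ofReal_nonneg ha.le (Nat.cast_nonneg _)]
      push_cast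
      ring
    rw [integral_congr_ae (Filter.Eventually.of_forall hrw), integral_mul_const,
      gammaMellinInv hσ0 hx]
    push_cast
    ring
  -- summability of the real double sum
  have hgeomN : Summable fun n : ℕ => Real.exp (-(a * n)) := by
    refine (summable_geometric_of_lt_one (Real.exp_nonneg (-a))
      (Real.exp_lt_one_iff.mpr (by linarith))).congr fun n => ?_
    rw [← Real.exp_nat_mul]
    ring_nf
  have hgeomΛ : Summable fun l : ↥Λ => Real.exp (-(a * (l : ℕ))) := hgeomN.subtype Λ
  have hr : Summable fun p : ↥Λ × ℕ =>
      Real.exp (-(a * (p.1 : ℕ) * ((p.2 : ℕ) + 1))) / (((p.2 : ℕ) : ℝ) + 1) := by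
    refine Summable.of_nonneg_of_le (fun p => by positivity) (fun p => ?_)
      (Summable.mul_of_nonneg (f := fun l : ↥Λ => Real.exp (-(a * (l : ℕ))))
        (g := fun k : ℕ => Real.exp (-(a * k))) hgeomΛ hgeomN
        (fun _ => Real.exp_nonneg _) (fun _ => Real.exp_nonneg _))
    calc Real.exp (-(a * (p.1 : ℕ) * ((p.2 : ℕ) + 1))) / (((p.2 : ℕ) : ℝ) + 1)
        ≤ Real.exp (-(a * (p.1 : ℕ) * ((p.2 : ℕ) + 1))) :=
          div_le_self (Real.exp_nonneg _) (by push_cast; linarith [Nat.cast_nonneg (α := ℝ) p.2])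
      _ ≤ Real.exp (-(a * (p.1 : ℕ))) * Real.exp (-(a * p.2)) := by
          rw [← Real.exp_add]
          refine Real.exp_le_exp.mpr ?_
          have h1 := hl1 p.1
          have h2 : (0 : ℝ) ≤ ((p.2 : ℕ) : ℝ) := Nat.cast_nonneg _
          nlinarith [mul_nonneg (mul_nonneg ha.le h2) (sub_nonneg.mpr h1)]
  have hrS : (∑' p : ↥Λ × ℕ,
        Real.exp (-(a * (p.1 : ℕ) * ((p.2 : ℕ) + 1))) / (((p.2 : ℕ) : ℝ) + 1))
      = ∑' l : Λ, ∑' k : ℕ, Real.exp (-(a * l * (k + 1))) / (k + 1) := hr.tsum_prod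
  -- final assembly
  have hF : (∫ y : ℝ, (a : ℂ) ^ (-((σ : ℂ) + y * I)) *
        (∑' l : Λ, ((l : ℕ) : ℂ) ^ (-((σ : ℂ) + y * I))) *
        riemannZeta (((σ : ℂ) + y * I) + 1) * Complex.Gamma ((σ : ℂ) + y * I))
      = 2 * (π : ℂ) *
        ((∑' l : Λ, ∑' k : ℕ, Real.exp (-(a * l * (k + 1))) / (k + 1) : ℝ) : ℂ) := by
    rw [integral_congr_ae (Filter.Eventually.of_forall hint), hswap, tsum_congr hval,
      tsum_mul_left, ← Complex.ofReal_tsum, hrS]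
  rw [integral_mul_const, hF]
  have hπ : (π : ℂ) ≠ 0 := by exact_mod_cast Real.pi_ne_zero
  have hI : (I : ℂ) ≠ 0 := Complex.I_ne_zero
  field_simp

open Complex Real

/-- For `a > 0` and a set `Λ` of positive integers whose Dirichlet series converges
absolutely for `Re t > μ₀`, and `σ > max(μ₀, 1)`:
`log ∏_{λ∈Λ} (1-e^{-aλ})⁻¹ = ∑_{λ∈Λ} ∑_{l≥1} e^{-aλl}/l
  = (1/2πi) ∫_{σ-i∞}^{σ+i∞} a^{-t} ζ_Λ(t) ζ(t+1) Γ(t) dt`. -/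
theorem log_partition_product_mellin_barnes (Λ : Set ℕ) (hΛ : ∀ l ∈ Λ, 1 ≤ l)
    (μ₀ : ℝ) (habs : ∀ r : ℝ, μ₀ < r → Summable fun l : Λ => ((l : ℝ) ^ r)⁻¹)
    (a : ℝ) (ha : 0 < a) (σ : ℝ) (hσ : max μ₀ 1 < σ) :
    Real.log (∏' l : Λ, (1 - Real.exp (-(a * l)))⁻¹)
        = ∑' l : Λ, ∑' k : ℕ, Real.exp (-(a * l * (k + 1))) / (k + 1) ∧
    ((∑' l : Λ, ∑' k : ℕ, Real.exp (-(a * l * (k + 1))) / (k + 1) : ℝ) : ℂ)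
        = (2 * (π : ℂ) * I)⁻¹ *
          ∫ y : ℝ,
            (a : ℂ) ^ (-((σ : ℂ) + y * I)) *
              (∑' l : Λ, ((l : ℕ) : ℂ) ^ (-((σ : ℂ) + y * I))) *
              riemannZeta (((σ : ℂ) + y * I) + 1) *
              Complex.Gamma ((σ : ℂ) + y * I) * I :=
  ⟨part1 Λ hΛ a ha, part2 Λ hΛ μ₀ habs a ha σ hσ⟩
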